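/- Let M be an n×l binary matrix, and for j = 1,...,l let c_j = {i : M_{i,j} = 1} ⊆ {1,...,n}, viewed as a strictly increasing column. Then the top-aligned juxtaposition c_1 c_2 ⋯ c_l is a semistandard Young tableau if and only if the word obtained from the transpose Mᵀ by reading, for i = 1,2,...,n in order, the set {j : M_{i,j} = 1} in increasing order and concatenating, is a lattice word in the alphabet {1,...,l}. -/

import Mathlib

/-- The `j`-th column of the binary matrix `M`, as the increasing list of the
(0-indexed) row indices `i` with `M (i,j) = 1`. -/
def colList {n l : ℕ} (M : Fin n × Fin l → Bool) (j : Fin l) : List ℕ :=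
  ((Finset.univ.filter (fun i : Fin n => M (i, j))).image (fun i : Fin n => (i : ℕ))).sort (· ≤ ·)

/-- The top-aligned juxtaposition `c_1 c_2 ⋯ c_l` of the columns of `M` is a
semistandard Young tableau: column lengths weakly decrease and, in each row,
entries weakly increase from left to right.  (Columns strictly increase
automatically, being sets.) -/
def IsTableau {n l : ℕ} (M : Fin n × Fin l → Bool) : Prop :=
  ∀ (j : ℕ) (hj : j + 1 < l),
    (colList M ⟨j + 1, hj⟩).length ≤ (colList M ⟨j, Nat.lt_of_succ_lt hj⟩).length ∧
    ∀ i < (colList M ⟨j + 1, hj⟩).length,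
      (colList M ⟨j, Nat.lt_of_succ_lt hj⟩).getD i 0 ≤ (colList M ⟨j + 1, hj⟩).getD i 0

/-- The row-reading word of the transpose of `M`: for `i = 1,…,n` in order, read the
set `{j : M_{i,j} = 1}` in increasing order (letters taken 1-based in `{1,…,l}`)
and concatenate. -/
def transposeWord {n l : ℕ} (M : Fin n × Fin l → Bool) : List ℕ :=
  (List.finRange n).flatMap (fun i : Fin n =>
    ((Finset.univ.filter (fun j : Fin l => M (i, j))).image (fun j : Fin l => (j : ℕ) + 1)).sort (· ≤ ·))

/-- Lattice (Yamanouchi) word: every prefix has at least as many letters `i` as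
letters `i+1`, for all `i ≥ 1`. -/
def IsLatticeWord (w : List ℕ) : Prop :=
  ∀ k i, 1 ≤ i → (w.take k).count (i + 1) ≤ (w.take k).count i

/-! ### Auxiliary definitions -/

/-- The `i`-th row of `M`, read as the increasing list of 1-based column letters. -/
def rowListAux {n l : ℕ} (M : Fin n × Fin l → Bool) (i : Fin n) : List ℕ :=
  ((Finset.univ.filter (fun j : Fin l => M (i, j))).image (fun j : Fin l => (j : ℕ) + 1)).sort (· ≤ ·)

/-- Number of rows `i < m` with `M (i,j) = 1`. -/
def Ncnt {n l : ℕ} (M : Fin n × Fin l → Bool) (j : Fin l) (m : ℕ) : ℕ :=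
  (Finset.univ.filter (fun i : Fin n => M (i, j) = true ∧ (i : ℕ) < m)).card

theorem countP_sort (s : Finset ℕ) (p : ℕ → Bool) :
    (s.sort (· ≤ ·)).countP p = (s.filter (p ·)).card := by
  have h1 : (s.sort (· ≤ ·)).countP p = s.toList.countP p :=
    (Finset.sort_perm_toList s (· ≤ ·)).countP_eq p
  have h2 : Multiset.countP (fun x => p x = true) (↑s.toList) = s.toList.countP p := by
    rw [Multiset.coe_countP]; simp
  have h3 : (↑s.toList : Multiset ℕ) = s.val := Multiset.coe_toList _
  rw [h1, ← h2, h3]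
  simp [Finset.filter, Finset.card, Multiset.countP_eq_card_filter]

theorem getD_lt_iff (a : List ℕ) (ha : a.Pairwise (· < ·)) :
    ∀ i, i < a.length → ∀ m, (a.getD i 0 < m ↔ i < a.countP (fun x => decide (x < m))) := by
  induction a with
  | nil => intro i hi; simp at hi
  | cons x t ih =>
    rw [List.pairwise_cons] at ha
    intro i hi m
    have hzero : ¬ x < m → t.countP (fun y => decide (y < m)) = 0 := by
      intro h
      rw [List.countP_eq_zero]
      intro y hy
      have := ha.1 y hy
      simp only [decide_eq_true_eq]
      omega
    cases i with
    | zero =>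
      simp only [List.getD_cons_zero, List.countP_cons]
      by_cases h : x < m
      · simp [h]
      · simp [h, hzero h]
    | succ i =>
      simp only [List.getD_cons_succ, List.countP_cons]
      have hi' : i < t.length := by simpa using hi
      by_cases h : x < m
      · rw [ih ha.2 i hi' m]; simp [h]
      · have h1 : t.getD i 0 ∈ t := by
          rw [List.getD_eq_getElem t 0 hi']
          exact List.getElem_mem _
        have h2 := ha.1 _ h1
        have h3 : ¬ t.getD i 0 < m := by omega
        refine iff_of_false h3 ?_
        rw [hzero h]
        simp [h]

theorem dom_iff (a b : List ℕ) (ha : a.Pairwise (· < ·)) (hb : b.Pairwise (· < ·)) :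
    (b.length ≤ a.length ∧ ∀ i < b.length, a.getD i 0 ≤ b.getD i 0) ↔
    ∀ m, b.countP (fun x => decide (x < m)) ≤ a.countP (fun x => decide (x < m)) := by
  constructor
  · rintro ⟨hlen, hle⟩ m
    set c := b.countP (fun x => decide (x < m)) with hc
    rcases Nat.eq_zero_or_pos c with h0 | h0
    · omega
    have hcb : c ≤ b.length := List.countP_le_length
    have h1 : b.getD (c - 1) 0 < m := (getD_lt_iff b hb (c - 1) (by omega) m).2 (by omega)
    have h2 : a.getD (c - 1) 0 < m := lt_of_le_of_lt (hle (c - 1) (by omega)) h1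
    have h3 := (getD_lt_iff a ha (c - 1) (by omega) m).1 h2
    omega
  · intro h
    have hlen : b.length ≤ a.length := by
      have hfull : b.countP (fun x => decide (x < b.sum + 1)) = b.length := by
        rw [List.countP_eq_length]
        intro x hx
        have := List.single_le_sum (fun y (_ : y ∈ b) => Nat.zero_le y) x hx
        simp only [decide_eq_true_eq]
        omega
      have h2 := h (b.sum + 1)
      have h3 : a.countP (fun x => decide (x < b.sum + 1)) ≤ a.length :=
        List.countP_le_length
      omega
    refine ⟨hlen, fun i hi => ?_⟩
    have h1 : i < b.countP (fun x => decide (x < b.getD i 0 + 1)) :=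
      (getD_lt_iff b hb i hi _).1 (by omega)
    have h2 : i < a.countP (fun x => decide (x < b.getD i 0 + 1)) :=
      lt_of_lt_of_le h1 (h _)
    have h3 := (getD_lt_iff a ha i (by omega) _).2 h2
    omega

theorem countP_colList {n l : ℕ} (M : Fin n × Fin l → Bool) (j : Fin l) (m : ℕ) :
    (colList M j).countP (fun x => decide (x < m)) = Ncnt M j m := by
  rw [colList, countP_sort, Ncnt, Finset.filter_image,
    Finset.card_image_of_injective _ Fin.val_injective, Finset.filter_filter]
  congr 1
  apply Finset.filter_congr
  intro i _
  simp

theorem isTableau_iff_Ncnt {n l : ℕ} (M : Fin n × Fin l → Bool) :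
    IsTableau M ↔ ∀ (j : ℕ) (hj : j + 1 < l) (m : ℕ),
      Ncnt M ⟨j + 1, hj⟩ m ≤ Ncnt M ⟨j, Nat.lt_of_succ_lt hj⟩ m := by
  unfold IsTableau
  refine forall_congr' fun j => forall_congr' fun hj => ?_
  have ha : (colList M ⟨j, Nat.lt_of_succ_lt hj⟩).Pairwise (· < ·) := (Finset.sortedLT_sort _).pairwise
  have hb : (colList M ⟨j + 1, hj⟩).Pairwise (· < ·) := (Finset.sortedLT_sort _).pairwise
  rw [dom_iff _ _ ha hb]
  refine forall_congr' fun m => ?_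
  rw [countP_colList, countP_colList]

/-! ### The transpose word -/

theorem transposeWord_eq {n l : ℕ} (M : Fin n × Fin l → Bool) :
    transposeWord M = (List.finRange n).flatMap (rowListAux M) := rfl

theorem rowListAux_sorted {n l : ℕ} (M : Fin n × Fin l → Bool) (i : Fin n) :
    (rowListAux M i).Pairwise (· < ·) := (Finset.sortedLT_sort _).pairwise

theorem rowListAux_nodup {n l : ℕ} (M : Fin n × Fin l → Bool) (i : Fin n) :
    (rowListAux M i).Nodup := Finset.sort_nodup _ _

theorem mem_rowListAux {n l : ℕ} (M : Fin n × Fin l → Bool) (i : Fin n) (j : Fin l) :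
    ((j : ℕ) + 1) ∈ rowListAux M i ↔ M (i, j) = true := by
  simp only [rowListAux, Finset.mem_sort, Finset.mem_image, Finset.mem_filter,
    Finset.mem_univ, true_and]
  constructor
  · rintro ⟨j', hj', hval⟩
    have : j' = j := Fin.ext (by omega)
    rwa [this] at hj'
  · intro h; exact ⟨j, h, rfl⟩

theorem mem_rowListAux_bounds {n l : ℕ} (M : Fin n × Fin l → Bool) (i : Fin n) (c : ℕ)
    (hc : c ∈ rowListAux M i) : 1 ≤ c ∧ c ≤ l := by
  simp only [rowListAux, Finset.mem_sort, Finset.mem_image, Finset.mem_filter,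
    Finset.mem_univ, true_and] at hc
  obtain ⟨j, _, rfl⟩ := hc
  exact ⟨by omega, by have := j.isLt; omega⟩

theorem count_rowListAux {n l : ℕ} (M : Fin n × Fin l → Bool) (i : Fin n) (j : Fin l) :
    (rowListAux M i).count ((j : ℕ) + 1) = if M (i, j) = true then 1 else 0 := by
  by_cases h : M (i, j) = true
  · rw [if_pos h]
    exact List.count_eq_one_of_mem (rowListAux_nodup M i) ((mem_rowListAux M i j).2 h)
  · rw [if_neg h, List.count_eq_zero]
    intro hmem; exact h ((mem_rowListAux M i j).1 hmem)

/-! ### Counting lemmas for `Ncnt` -/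

theorem Ncnt_zero {n l : ℕ} (M : Fin n × Fin l → Bool) (j : Fin l) : Ncnt M j 0 = 0 := by
  simp [Ncnt]

theorem Ncnt_succ {n l : ℕ} (M : Fin n × Fin l → Bool) (j : Fin l) (m : ℕ) (hm : m < n) :
    Ncnt M j (m + 1) = Ncnt M j m + if M (⟨m, hm⟩, j) = true then 1 else 0 := by
  classical
  unfold Ncnt
  rw [Finset.card_filter, Finset.card_filter]
  have key : ∀ i : Fin n, (if M (i, j) = true ∧ (i : ℕ) < m + 1 then 1 else 0)
      = (if M (i, j) = true ∧ (i : ℕ) < m then 1 else 0)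
        + (if i = ⟨m, hm⟩ then (if M (i, j) = true then 1 else 0) else 0) := by
    intro i
    have hor : ((i : ℕ) < m + 1) = ((i : ℕ) < m ∨ (i : ℕ) = m) := by
      simp [Nat.lt_succ_iff_lt_or_eq]
      exact Nat.le_iff_lt_or_eq
    by_cases h1 : M (i, j) = true <;> simp [h1, Fin.ext_iff, hor] <;> split_ifs <;> omega
  rw [Finset.sum_congr rfl (fun i _ => key i), Finset.sum_add_distrib,
    Finset.sum_ite_eq' Finset.univ (⟨m, hm⟩ : Fin n) (fun i => if M (i, j) = true then 1 else 0)]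
  simp

theorem Ncnt_of_le {n l : ℕ} (M : Fin n × Fin l → Bool) (j : Fin l) (m : ℕ) (hm : n ≤ m) :
    Ncnt M j m = Ncnt M j n := by
  unfold Ncnt
  congr 1
  apply Finset.filter_congr
  intro i _
  have := i.isLt
  constructor <;> rintro ⟨h1, h2⟩ <;> exact ⟨h1, by omega⟩

/-! ### Prefixes of the transpose word -/

/-- The first `m` rows of the transpose word. -/
def Wpref {n l : ℕ} (M : Fin n × Fin l → Bool) (m : ℕ) : List ℕ :=
  ((List.finRange n).take m).flatMap (rowListAux M)

theorem count_Wpref {n l : ℕ} (M : Fin n × Fin l → Bool) (j : Fin l) :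
    ∀ m, m ≤ n → (Wpref M m).count ((j : ℕ) + 1) = Ncnt M j m := by
  intro m
  induction m with
  | zero => intro _; simp [Wpref, Ncnt_zero]
  | succ m ih =>
    intro hm
    have hm' : m < n := hm
    have hget : (List.finRange n)[m]? = some ⟨m, hm'⟩ := by
      rw [List.getElem?_eq_getElem (by simpa using hm')]
      simp
    rw [Wpref, List.take_succ, hget]
    simp only [Option.toList_some, List.flatMap_append]
    rw [List.count_append]
    have h1 : ([(⟨m, hm'⟩ : Fin n)].flatMap (rowListAux M)) = rowListAux M ⟨m, hm'⟩ := by simp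
    rw [h1, count_rowListAux, Ncnt_succ M j m hm']
    rw [show ((List.finRange n).take m).flatMap (rowListAux M) = Wpref M m from rfl,
      ih (le_of_lt hm')]

theorem Wpref_prefix {n l : ℕ} (M : Fin n × Fin l → Bool) (m : ℕ) :
    Wpref M m <+: transposeWord M := by
  rw [transposeWord_eq, Wpref]
  conv_rhs => rw [← List.take_append_drop m (List.finRange n)]
  rw [List.flatMap_append]
  exact List.prefix_append _ _

/-! ### Decomposing a prefix of a flattened list -/

theorem take_flatMap {α β : Type*} (f : α → List β) (L : List α) :
    ∀ k : ℕ, ∃ m r, m ≤ L.length ∧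
      (L.flatMap f).take k = (L.take m).flatMap f ++ r ∧
      (r = [] ∨ ∃ hm : m < L.length, r <+: f (L.get ⟨m, hm⟩)) := by
  induction L with
  | nil => intro k; exact ⟨0, [], by simp, by simp, Or.inl rfl⟩
  | cons x t ih =>
    intro k
    by_cases hk : k ≤ (f x).length
    · refine ⟨0, (f x).take k, by simp, ?_, Or.inr ⟨by simp, List.take_prefix _ _⟩⟩
      rw [List.flatMap_cons, List.take_append]
      have h0 : k - (f x).length = 0 := by omega
      simp [h0]
    · obtain ⟨m, r, hm, heq, hpre⟩ := ih (k - (f x).length)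
      refine ⟨m + 1, r, by simpa using hm, ?_, ?_⟩
      · rw [List.flatMap_cons, List.take_append,
          List.take_of_length_le (by omega), List.take_succ_cons, List.flatMap_cons, heq,
          List.append_assoc]
      · rcases hpre with h | ⟨hm', hp⟩
        · exact Or.inl h
        · exact Or.inr ⟨by simpa using Nat.succ_lt_succ hm', hp⟩

theorem mem_of_prefix_sorted {r s : List ℕ} (h : r <+: s) (hs : s.Pairwise (· < ·))
    {a b : ℕ} (hab : a < b) (hb : b ∈ r) (ha : a ∈ s) : a ∈ r := by
  obtain ⟨t, rfl⟩ := h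
  rcases List.mem_append.1 ha with h1 | h2
  · exact h1
  · have := (List.pairwise_append.1 hs).2.2 b hb a h2
    omega

/-! ### The lattice-word condition in terms of `Ncnt` -/

theorem lattice_iff_Ncnt {n l : ℕ} (M : Fin n × Fin l → Bool) :
    IsLatticeWord (transposeWord M) ↔ ∀ (j : ℕ) (hj : j + 1 < l) (m : ℕ),
      Ncnt M ⟨j + 1, hj⟩ m ≤ Ncnt M ⟨j, Nat.lt_of_succ_lt hj⟩ m := by
  constructor
  · intro hL j hj m
    have key : ∀ m', m' ≤ n →
        Ncnt M ⟨j + 1, hj⟩ m' ≤ Ncnt M ⟨j, Nat.lt_of_succ_lt hj⟩ m' := by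
      intro m' hm'
      have hpre : Wpref M m' <+: transposeWord M := Wpref_prefix M m'
      have htake : (transposeWord M).take (Wpref M m').length = Wpref M m' :=
        (List.prefix_iff_eq_take.1 hpre).symm
      have hcnt := hL (Wpref M m').length (j + 1) (by omega)
      rw [htake] at hcnt
      have e1 : (Wpref M m').count (j + 1 + 1) = Ncnt M ⟨j + 1, hj⟩ m' := by
        simpa using count_Wpref M ⟨j + 1, hj⟩ m' hm'
      have e2 : (Wpref M m').count (j + 1) = Ncnt M ⟨j, Nat.lt_of_succ_lt hj⟩ m' := by
        simpa using count_Wpref M ⟨j, Nat.lt_of_succ_lt hj⟩ m' hm'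
      rw [e1, e2] at hcnt
      exact hcnt
    rcases le_or_gt m n with h | h
    · exact key m h
    · rw [Ncnt_of_le M _ m h.le, Ncnt_of_le M _ m h.le]
      exact key n le_rfl
  · intro hP k i hi1
    by_cases hil : i + 1 ≤ l
    · obtain ⟨j, rfl⟩ : ∃ j, i = j + 1 := ⟨i - 1, by omega⟩
      have hj : j + 1 < l := by omega
      obtain ⟨m, r, hm, heq, hpre⟩ := take_flatMap (rowListAux M) (List.finRange n) k
      have hmn : m ≤ n := by simpa using hm
      have hu : (transposeWord M).take k = Wpref M m ++ r := by
        rw [transposeWord_eq, heq]; rfl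
      have hcw1 : ((transposeWord M).take k).count (j + 1 + 1)
          = Ncnt M ⟨j + 1, hj⟩ m + r.count (j + 1 + 1) := by
        rw [hu, List.count_append]
        congr 1
        simpa using count_Wpref M ⟨j + 1, hj⟩ m hmn
      have hcw0 : ((transposeWord M).take k).count (j + 1)
          = Ncnt M ⟨j, Nat.lt_of_succ_lt hj⟩ m + r.count (j + 1) := by
        rw [hu, List.count_append]
        congr 1
        simpa using count_Wpref M ⟨j, Nat.lt_of_succ_lt hj⟩ m hmn
      rcases hpre with rfl | ⟨hm', hp⟩
      · have := hP j hj m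
        simp only [List.count_nil] at hcw1 hcw0
        omega
      · have hmn' : m < n := by simpa using hm'
        have him : (List.finRange n).get ⟨m, hm'⟩ = ⟨m, hmn'⟩ := List.get_finRange _
        rw [him] at hp
        have hs_sorted : (rowListAux M ⟨m, hmn'⟩).Pairwise (· < ·) := rowListAux_sorted M _
        have hs_nd : (rowListAux M ⟨m, hmn'⟩).Nodup := rowListAux_nodup M _
        have hr1 : r.count (j + 1 + 1) ≤ 1 :=
          le_trans (hp.sublist.count_le _) (List.nodup_iff_count_le_one.1 hs_nd _)
        by_cases hmem : (j + 1 + 1) ∈ r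
        · have hM1 : M (⟨m, hmn'⟩, ⟨j + 1, hj⟩) = true := by
            have h2 : (j + 1 + 1) ∈ rowListAux M ⟨m, hmn'⟩ := hp.subset hmem
            exact (mem_rowListAux M ⟨m, hmn'⟩ ⟨j + 1, hj⟩).1 (by simpa using h2)
          by_cases hM0 : M (⟨m, hmn'⟩, ⟨j, Nat.lt_of_succ_lt hj⟩) = true
          · have hins : (j + 1) ∈ rowListAux M ⟨m, hmn'⟩ := by
              simpa using (mem_rowListAux M ⟨m, hmn'⟩ ⟨j, Nat.lt_of_succ_lt hj⟩).2 hM0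
            have hin : (j + 1) ∈ r :=
              mem_of_prefix_sorted hp hs_sorted (by omega) hmem hins
            have hge : 1 ≤ r.count (j + 1) := List.count_pos_iff.2 hin
            have := hP j hj m
            omega
          · have h1 := hP j hj (m + 1)
            rw [Ncnt_succ M ⟨j + 1, hj⟩ m hmn', Ncnt_succ M ⟨j, Nat.lt_of_succ_lt hj⟩ m hmn',
              if_pos hM1, if_neg hM0] at h1
            omega
        · have hzero : r.count (j + 1 + 1) = 0 := List.count_eq_zero.2 hmem
          have := hP j hj m
          omega
    · have hnotmem : (i + 1) ∉ (transposeWord M).take k := by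
        intro hmem
        have hmem' : (i + 1) ∈ transposeWord M := List.mem_of_mem_take hmem
        rw [transposeWord_eq, List.mem_flatMap] at hmem'
        obtain ⟨a, _, hms⟩ := hmem'
        have := (mem_rowListAux_bounds M a _ hms).2
        omega
      rw [List.count_eq_zero.2 hnotmem]
      exact Nat.zero_le _

theorem isTableau_iff_transpose_lattice {n l : ℕ} (M : Fin n × Fin l → Bool) :
    IsTableau M ↔ IsLatticeWord (transposeWord M) := by
  rw [isTableau_iff_Ncnt, lattice_iff_Ncnt]
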